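/- arXiv:2103.06950 — 3 statements merged into one kernel-verified Lean document; each statement's English description precedes it below -/
import Mathlib

section
/- For any A ≥ 0, σ > 0, and μ ∈ ℝ, the function K(r) = A exp(−2π²σ²r²) cos(2πμr) is a positive semidefinite kernel on ℝ: for all n ∈ ℕ, points x₁,…,xₙ ∈ ℝ and coefficients a₁,…,aₙ ∈ ℝ, we have Σᵢⱼ aᵢaⱼ K(xᵢ − xⱼ) ≥ 0. -/
open Real

lemma exp_mul_psd (c : ℝ) (hc : 0 ≤ c) (n : ℕ) (x v : Fin n → ℝ) :
    0 ≤ ∑ i, ∑ j, v i * v j * Real.exp (c * (x i * x j)) := by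
  have hexp : ∀ s : ℝ, Real.exp s = ∑' k : ℕ, s ^ k / k.factorial := by
    intro s
    rw [Real.exp_eq_exp_ℝ, NormedSpace.exp_eq_tsum_div]
  have hsummable : ∀ (b s : ℝ), Summable (fun k : ℕ => b * (s ^ k / k.factorial)) :=
    fun b s => (Real.summable_pow_div_factorial s).mul_left b
  have key : ∑ i, ∑ j, v i * v j * Real.exp (c * (x i * x j))
      = ∑' k : ℕ, (c ^ k / k.factorial) * (∑ i, v i * x i ^ k) ^ 2 := by
    have h1 : ∀ i j : Fin n, v i * v j * Real.exp (c * (x i * x j))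
        = ∑' k : ℕ, v i * v j * ((c * (x i * x j)) ^ k / k.factorial) := by
      intro i j
      rw [hexp, tsum_mul_left]
    calc ∑ i, ∑ j, v i * v j * Real.exp (c * (x i * x j))
        = ∑ i, ∑ j, ∑' k : ℕ, v i * v j * ((c * (x i * x j)) ^ k / k.factorial) := by
          simp_rw [h1]
      _ = ∑' k : ℕ, ∑ i, ∑ j, v i * v j * ((c * (x i * x j)) ^ k / k.factorial) := by
          have hinner : ∀ i : Fin n,
              ∑ j, ∑' k : ℕ, v i * v j * ((c * (x i * x j)) ^ k / k.factorial)
              = ∑' k : ℕ, ∑ j, v i * v j * ((c * (x i * x j)) ^ k / k.factorial) :=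
            fun i => (Summable.tsum_finsetSum (fun j _ => hsummable _ _)).symm
          simp_rw [hinner]
          exact (Summable.tsum_finsetSum (fun i _ => summable_sum (fun j _ => hsummable _ _))).symm
      _ = ∑' k : ℕ, (c ^ k / k.factorial) * (∑ i, v i * x i ^ k) ^ 2 := by
          congr 1
          funext k
          rw [sq, Finset.sum_mul_sum]
          rw [Finset.mul_sum]
          congr 1
          funext i
          rw [Finset.mul_sum]
          congr 1
          funext j
          rw [mul_pow, mul_pow]
          field_simp
  rw [key]
  apply tsum_nonneg
  intro k
  have : 0 ≤ c ^ k / k.factorial := by positivity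
  positivity

/-- The Gaussian spectral-mixture kernel component
`K(r) = A exp(−2π²σ²r²) cos(2πμr)` is a positive semidefinite kernel on `ℝ`. -/
theorem gaussian_sm_posdef (A σ μ : ℝ) (hA : 0 ≤ A) (hσ : 0 < σ)
    (n : ℕ) (x : Fin n → ℝ) (a : Fin n → ℝ) :
    0 ≤ ∑ i, ∑ j, a i * a j *
        (A * Real.exp (-2 * π^2 * σ^2 * (x i - x j)^2) * Real.cos (2 * π * μ * (x i - x j))) := by
  set c : ℝ := 2 * π ^ 2 * σ ^ 2 with hc
  have hc0 : 0 ≤ c := by positivity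
  set b : Fin n → ℝ := fun i => Real.exp (-(c * x i ^ 2)) with hb
  set u : Fin n → ℝ := fun i => a i * b i * Real.cos (2 * π * μ * x i) with hu
  set w : Fin n → ℝ := fun i => a i * b i * Real.sin (2 * π * μ * x i) with hw
  have hsummand : ∀ i j : Fin n,
      a i * a j *
        (A * Real.exp (-2 * π^2 * σ^2 * (x i - x j)^2) * Real.cos (2 * π * μ * (x i - x j)))
      = A * (u i * u j * Real.exp ((2 * c) * (x i * x j))
           + w i * w j * Real.exp ((2 * c) * (x i * x j))) := by
    intro i j
    have hcos : Real.cos (2 * π * μ * (x i - x j))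
        = Real.cos (2 * π * μ * x i) * Real.cos (2 * π * μ * x j)
          + Real.sin (2 * π * μ * x i) * Real.sin (2 * π * μ * x j) := by
      rw [show 2 * π * μ * (x i - x j) = 2 * π * μ * x i - 2 * π * μ * x j by ring,
        Real.cos_sub]
    have hgauss : Real.exp (-2 * π^2 * σ^2 * (x i - x j)^2)
        = b i * b j * Real.exp ((2 * c) * (x i * x j)) := by
      rw [hb]
      simp only []
      rw [← Real.exp_add, ← Real.exp_add]
      congr 1
      ring
    rw [hcos, hgauss, hu, hw]
    ring
  simp_rw [hsummand, ← Finset.mul_sum]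
  apply mul_nonneg hA
  have h2c : (0:ℝ) ≤ 2 * c := by linarith
  have := exp_mul_psd (2 * c) h2c n x u
  have := exp_mul_psd (2 * c) h2c n x w
  simp_rw [Finset.sum_add_distrib]
  linarith
end

section
/- For any A ≥ 0, w > 0, and μ ∈ ℝ, the kernel K(r) = A cos(2πμr) sinc(rw) with sinc(x) = sin(πx)/(πx) (sinc(0)=1) is positive semidefinite on ℝ: for all n ∈ ℕ, points x₁,…,xₙ ∈ ℝ and real coefficients a₁,…,aₙ, Σᵢⱼ aᵢaⱼ K(xᵢ − xⱼ) ≥ 0. -/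
open Real

/-- `sinc x = sin(πx)/(πx)`, with `sinc 0 = 1`. -/
noncomputable def sinc (x : ℝ) : ℝ := if x = 0 then 1 else Real.sin (π * x) / (π * x)

lemma integral_cos_mul' (c a b : ℝ) (hc : c ≠ 0) :
    ∫ ξ in a..b, Real.cos (c * ξ) = (Real.sin (c * b) - Real.sin (c * a)) / c := by
  rw [intervalIntegral.integral_comp_mul_left _ hc, integral_cos]
  rw [smul_eq_mul]; ring

lemma sinc_repr (w μ : ℝ) (hw : 0 < w) (r : ℝ) :
    Real.cos (2 * π * μ * r) * _root_.sinc (r * w) =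
      (1 / w) * ∫ ξ in (μ - w / 2)..(μ + w / 2), Real.cos (2 * π * ξ * r) := by
  by_cases hr : r = 0
  · simp [hr, _root_.sinc, hw.ne']
  · have hπ : (π : ℝ) ≠ 0 := Real.pi_ne_zero
    have hc : 2 * π * r ≠ 0 := by simp [hr, hπ]
    have hrr : ∀ ξ : ℝ, Real.cos (2 * π * ξ * r) = Real.cos ((2 * π * r) * ξ) := by
      intro ξ; ring
    simp_rw [hrr]
    rw [integral_cos_mul' _ _ _ hc, Real.sin_sub_sin]
    have hrw : r * w ≠ 0 := mul_ne_zero hr hw.ne'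
    rw [_root_.sinc, if_neg hrw]
    have h1 : (2 * π * r * (μ + w / 2) - 2 * π * r * (μ - w / 2)) / 2 = π * (r * w) := by
      ring
    have h2 : (2 * π * r * (μ + w / 2) + 2 * π * r * (μ - w / 2)) / 2 = 2 * π * μ * r := by
      ring
    rw [h1, h2]
    have hπrw : π * (r * w) ≠ 0 := mul_ne_zero hπ hrw
    field_simp

lemma pointwise_nonneg (n : ℕ) (x a : Fin n → ℝ) (ξ : ℝ) :
    0 ≤ ∑ i, ∑ j, a i * a j * Real.cos (2 * π * ξ * (x i - x j)) := by
  have h : ∑ i, ∑ j, a i * a j * Real.cos (2 * π * ξ * (x i - x j)) =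
      (∑ i, a i * Real.cos (2 * π * ξ * x i)) ^ 2 +
      (∑ i, a i * Real.sin (2 * π * ξ * x i)) ^ 2 := by
    rw [sq, sq, Finset.sum_mul_sum, Finset.sum_mul_sum, ← Finset.sum_add_distrib]
    refine Finset.sum_congr rfl fun i _ => ?_
    rw [← Finset.sum_add_distrib]
    refine Finset.sum_congr rfl fun j _ => ?_
    have : 2 * π * ξ * (x i - x j) = 2 * π * ξ * x i - 2 * π * ξ * x j := by ring
    rw [this, Real.cos_sub]
    ring
  rw [h]
  positivity

/-- The block spectral-mixture (sinc) kernel component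
`K(r) = A cos(2πμr) sinc(rw)` is a positive semidefinite kernel on `ℝ`. -/
theorem block_sm_posdef (A w μ : ℝ) (hA : 0 ≤ A) (hw : 0 < w)
    (n : ℕ) (x : Fin n → ℝ) (a : Fin n → ℝ) :
    0 ≤ ∑ i, ∑ j, a i * a j *
        (A * Real.cos (2 * π * μ * (x i - x j)) * _root_.sinc ((x i - x j) * w)) := by
  have hcont : ∀ i j : Fin n, IntervalIntegrable
      (fun ξ => a i * a j * Real.cos (2 * π * ξ * (x i - x j))) MeasureTheory.volume
      (μ - w / 2) (μ + w / 2) := by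
    intro i j
    exact (Continuous.intervalIntegrable (by fun_prop) _ _)
  have key : ∀ i j : Fin n,
      a i * a j * (A * Real.cos (2 * π * μ * (x i - x j)) * _root_.sinc ((x i - x j) * w)) =
      (A / w) * ∫ ξ in (μ - w / 2)..(μ + w / 2),
        a i * a j * Real.cos (2 * π * ξ * (x i - x j)) := by
    intro i j
    rw [intervalIntegral.integral_const_mul, mul_assoc A, sinc_repr w μ hw (x i - x j)]
    ring
  simp_rw [key, ← Finset.mul_sum]
  have h1 : ∀ i : Fin n, ∑ j, (∫ ξ in (μ - w / 2)..(μ + w / 2),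
      a i * a j * Real.cos (2 * π * ξ * (x i - x j))) =
      ∫ ξ in (μ - w / 2)..(μ + w / 2),
        ∑ j, a i * a j * Real.cos (2 * π * ξ * (x i - x j)) := fun i =>
    (intervalIntegral.integral_finset_sum (fun j _ => hcont i j)).symm
  simp_rw [h1]
  have hInt2 : ∀ i : Fin n, IntervalIntegrable
      (fun ξ => ∑ j, a i * a j * Real.cos (2 * π * ξ * (x i - x j))) MeasureTheory.volume
      (μ - w / 2) (μ + w / 2) := fun i =>
    (Continuous.intervalIntegrable (by fun_prop) _ _)
  rw [← intervalIntegral.integral_finset_sum (fun i _ => hInt2 i)]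
  exact mul_nonneg (div_nonneg hA hw.le)
    (intervalIntegral.integral_nonneg (by linarith) (fun ξ _ => pointwise_nonneg n x a ξ))
end

section
/- Let Q ∈ ℕ, and for each q ∈ {1,…,Q} let A^q be an N×N real positive semidefinite matrix, μ^q ∈ ℝ, w^q > 0. Define the matrix-valued function K : ℝ → ℝ^{N×N} by K_{ij}(r) = Σ_q A^q_{ij} cos(2πμ^q r) sinc(r w^q). Then K is a valid multi-output covariance: for all n ∈ ℕ, points x₁,…,xₙ ∈ ℝ, channel indices c₁,…,cₙ ∈ {1,…,N}, and real coefficients a₁,…,aₙ, we have Σ_{k,l} a_k a_l K_{c_k c_l}(x_k − x_l) ≥ 0. -/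
open Real

open Matrix in
/-- Quadratic form over channel indices is nonnegative for a PSD matrix. -/
lemma quad_channel_nonneg {N n : ℕ} (M : Matrix (Fin N) (Fin N) ℝ)
    (hM : M.PosSemidef) (c : Fin n → Fin N) (b : Fin n → ℝ) :
    0 ≤ ∑ k, ∑ l, b k * b l * M (c k) (c l) := by
  set v : Fin N → ℝ := fun i => ∑ k, if c k = i then b k else 0 with hv
  have h0 := hM.dotProduct_mulVec_nonneg v
  have hmv : ∀ i, (M *ᵥ v) i = ∑ l, M i (c l) * b l := by
    intro i
    simp only [Matrix.mulVec, dotProduct, hv, Finset.mul_sum, mul_ite, mul_zero]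
    rw [Finset.sum_comm]
    refine Finset.sum_congr rfl fun l _ => ?_
    rw [Finset.sum_ite_eq]
    simp
  have hdp : dotProduct (star v) (M *ᵥ v) = ∑ k, ∑ l, b k * b l * M (c k) (c l) := by
    simp only [star_trivial, dotProduct, hmv, hv, Finset.sum_mul, ite_mul, zero_mul]
    rw [Finset.sum_comm]
    refine Finset.sum_congr rfl fun k _ => ?_
    rw [Finset.sum_ite_eq]
    simp [Finset.mul_sum]
    rw [← hv, hmv, Finset.mul_sum]
    refine Finset.sum_congr rfl fun l _ => by ring
  rw [hdp] at h0
  exact h0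

/-- Pointwise nonnegativity of the cosine quadratic form. -/
lemma cos_quad_nonneg {N n : ℕ} (M : Matrix (Fin N) (Fin N) ℝ)
    (hM : M.PosSemidef) (c : Fin n → Fin N) (a : Fin n → ℝ) (x : Fin n → ℝ) (ν : ℝ) :
    0 ≤ ∑ k, ∑ l, a k * a l * M (c k) (c l) * Real.cos (2 * π * ν * (x k - x l)) := by
  have hcos : ∀ k l : Fin n,
      a k * a l * M (c k) (c l) * Real.cos (2 * π * ν * (x k - x l)) =
      (a k * Real.cos (2 * π * ν * x k)) * (a l * Real.cos (2 * π * ν * x l)) * M (c k) (c l)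
      + (a k * Real.sin (2 * π * ν * x k)) * (a l * Real.sin (2 * π * ν * x l)) * M (c k) (c l) := by
    intro k l
    have : 2 * π * ν * (x k - x l) = 2 * π * ν * x k - 2 * π * ν * x l := by ring
    rw [this, Real.cos_sub]
    ring
  calc (0:ℝ) ≤ (∑ k, ∑ l, (a k * Real.cos (2 * π * ν * x k)) * (a l * Real.cos (2 * π * ν * x l)) * M (c k) (c l))
      + ∑ k, ∑ l, (a k * Real.sin (2 * π * ν * x k)) * (a l * Real.sin (2 * π * ν * x l)) * M (c k) (c l) := by
        have h1 := quad_channel_nonneg M hM c (fun k => a k * Real.cos (2 * π * ν * x k))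
        have h2 := quad_channel_nonneg M hM c (fun k => a k * Real.sin (2 * π * ν * x k))
        exact add_nonneg h1 h2
    _ = ∑ k, ∑ l, a k * a l * M (c k) (c l) * Real.cos (2 * π * ν * (x k - x l)) := by
        rw [← Finset.sum_add_distrib]
        refine Finset.sum_congr rfl fun k _ => ?_
        rw [← Finset.sum_add_distrib]
        exact Finset.sum_congr rfl fun l _ => (hcos k l).symm

/-- The key integral identity: integrating `cos(2πνr)` over a band gives `cos·sinc`. -/
lemma integral_cos_band (r μ w : ℝ) (hw : 0 < w) :
    ∫ ν in (μ - w / 2)..(μ + w / 2), Real.cos (2 * π * ν * r)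
      = w * (Real.cos (2 * π * μ * r) * _root_.sinc (r * w)) := by
  rcases eq_or_ne r 0 with h | h
  · simp [h, _root_.sinc]
  · have hπ : π ≠ 0 := Real.pi_ne_zero
    have hc : (2 * π * r : ℝ) ≠ 0 := by
      simp [hπ, h]
    have heq : ∀ ν : ℝ, 2 * π * ν * r = 2 * π * r * ν := fun ν => by ring
    simp_rw [heq]
    rw [intervalIntegral.integral_comp_mul_left Real.cos hc, integral_cos]
    have ha : 2 * π * r * (μ + w / 2) = 2 * π * r * μ + π * (r * w) := by ring
    have hb : 2 * π * r * (μ - w / 2) = 2 * π * r * μ - π * (r * w) := by ring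
    rw [ha, hb, Real.sin_add, Real.sin_sub]
    have hrw : r * w ≠ 0 := mul_ne_zero h (ne_of_gt hw)
    rw [_root_.sinc, if_neg hrw, smul_eq_mul]
    field_simp
    ring

set_option maxHeartbeats 1000000 in
/-- The (one-dimensional input) Minecraft kernel
`K_{ij}(r) = Σ_q A^q_{ij} cos(2πμ^q r) sinc(r w^q)`, with each `A^q` positive semidefinite,
is a valid multi-output covariance function. -/
theorem minecraft_kernel_valid (N Q : ℕ)
    (A : Fin Q → Matrix (Fin N) (Fin N) ℝ) (hA : ∀ q, (A q).PosSemidef)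
    (μ w : Fin Q → ℝ) (hw : ∀ q, 0 < w q)
    (n : ℕ) (x : Fin n → ℝ) (c : Fin n → Fin N) (a : Fin n → ℝ) :
    0 ≤ ∑ k, ∑ l, a k * a l *
        (∑ q, A q (c k) (c l) * Real.cos (2 * π * μ q * (x k - x l)) *
          _root_.sinc ((x k - x l) * w q)) := by
  have key : ∀ q : Fin Q, 0 ≤ ∑ k, ∑ l, a k * a l *
        (A q (c k) (c l) * Real.cos (2 * π * μ q * (x k - x l)) *
          _root_.sinc ((x k - x l) * w q)) := by
    intro q
    set F : ℝ → ℝ := fun ν => ∑ k, ∑ l,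
      a k * a l * A q (c k) (c l) * Real.cos (2 * π * ν * (x k - x l)) with hF
    have hcont : ∀ (k l : Fin n), Continuous
        (fun ν => a k * a l * A q (c k) (c l) * Real.cos (2 * π * ν * (x k - x l))) := by
      intro k l
      have hc1 : Continuous fun ν : ℝ => 2 * π * ν * (x k - x l) :=
        (continuous_const.mul continuous_id).mul continuous_const
      exact continuous_const.mul (Real.continuous_cos.comp hc1)
    have hInt : ∀ (k l : Fin n), IntervalIntegrable
        (fun ν => a k * a l * A q (c k) (c l) * Real.cos (2 * π * ν * (x k - x l)))
        MeasureTheory.volume (μ q - w q / 2) (μ q + w q / 2) :=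
      fun k l => (hcont k l).intervalIntegrable _ _
    have hIeq : ∫ ν in (μ q - w q / 2)..(μ q + w q / 2), F ν
        = ∑ k, ∑ l, a k * a l * A q (c k) (c l) *
            (w q * (Real.cos (2 * π * μ q * (x k - x l)) * _root_.sinc ((x k - x l) * w q))) := by
      simp only [hF]
      rw [intervalIntegral.integral_finset_sum
        (f := fun k ν => ∑ l, a k * a l * A q (c k) (c l) * Real.cos (2 * π * ν * (x k - x l)))
        (fun k _ => ((continuous_finset_sum _ fun l _ => hcont k l).intervalIntegrable _ _))]
      refine Finset.sum_congr rfl fun k _ => ?_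
      rw [intervalIntegral.integral_finset_sum
        (f := fun l ν => a k * a l * A q (c k) (c l) * Real.cos (2 * π * ν * (x k - x l)))
        (fun l _ => hInt k l)]
      refine Finset.sum_congr rfl fun l _ => ?_
      rw [intervalIntegral.integral_const_mul, integral_cos_band _ _ _ (hw q)]
    have hnn : 0 ≤ ∫ ν in (μ q - w q / 2)..(μ q + w q / 2), F ν := by
      apply intervalIntegral.integral_nonneg
      · linarith [hw q]
      · intro ν _
        exact cos_quad_nonneg (A q) (hA q) c a x ν
    rw [hIeq] at hnn
    have hfac : ∑ k, ∑ l, a k * a l * A q (c k) (c l) *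
            (w q * (Real.cos (2 * π * μ q * (x k - x l)) * _root_.sinc ((x k - x l) * w q)))
        = w q * ∑ k, ∑ l, a k * a l *
        (A q (c k) (c l) * Real.cos (2 * π * μ q * (x k - x l)) *
          _root_.sinc ((x k - x l) * w q)) := by
      simp_rw [Finset.mul_sum]
      refine Finset.sum_congr rfl fun k _ => Finset.sum_congr rfl fun l _ => by ring
    rw [hfac] at hnn
    exact nonneg_of_mul_nonneg_right hnn (hw q)
  calc (0:ℝ) ≤ ∑ q, ∑ k, ∑ l, a k * a l *
        (A q (c k) (c l) * Real.cos (2 * π * μ q * (x k - x l)) *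
          _root_.sinc ((x k - x l) * w q)) := Finset.sum_nonneg fun q _ => key q
    _ = ∑ k, ∑ l, a k * a l *
        (∑ q, A q (c k) (c l) * Real.cos (2 * π * μ q * (x k - x l)) *
          _root_.sinc ((x k - x l) * w q)) := by
        simp_rw [Finset.mul_sum]
        rw [Finset.sum_comm]
        refine Finset.sum_congr rfl fun k _ => ?_
        rw [Finset.sum_comm]
end
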